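/- arXiv:1911.05437 — 5 statements merged into one kernel-verified Lean document; each statement's English description precedes it below -/
import Mathlib

section
/- If {|f_i⟩}_{i=1}^{d²} is a SIC in ℂ^d, then the tensor squares form an equiangular tight frame on the symmetric subspace: (1/d²) ∑_{i=1}^{d²} |f_i⟩|f_i⟩⟨f_i|⟨f_i| = (2/(d(d+1))) P_sym, where P_sym is the orthogonal projector onto the symmetric subspace of ℂ^d ⊗ ℂ^d. -/
open Matrix Complex BigOperators

noncomputable def ww (d : ℕ) : ℂ := Complex.exp (2 * Real.pi * Complex.I / d)

noncomputable def tt (d : ℕ) : ℂ := Complex.exp (2 * Real.pi * Complex.I * (d + 1) / (2 * d))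

/-- Displacement operator `T_a = τ^{a₁a₂} S^{a₁} C^{a₂}` as a concrete matrix. -/
noncomputable def T (d : ℕ) (a : ℤ × ℤ) : Matrix (ZMod d) (ZMod d) ℂ :=
  Matrix.of fun i j => tt d ^ (a.1 * a.2) *
    (if i = j + (a.1 : ZMod d) then ww d ^ (a.2 * (j.val : ℤ)) else 0)

def fz {d : ℕ} (a : Fin d × Fin d) : ℤ × ℤ := (((a.1 : ℕ) : ℤ), ((a.2 : ℕ) : ℤ))

noncomputable def dotc {α : Type*} [Fintype α] (v w : α → ℂ) : ℂ := ∑ p, star (v p) * w p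

/-- Orthogonal projection onto the symmetric subspace of `ℂ^d ⊗ ℂ^d`. -/
noncomputable def Psym (d : ℕ) : Matrix (ZMod d × ZMod d) (ZMod d × ZMod d) ℂ :=
  Matrix.of fun p q => (1 / 2 : ℂ) * ((if p = q then 1 else 0) + (if p = (q.2, q.1) then 1 else 0))

/-- `T_a ⊗ T_a` -/
noncomputable def TT (d : ℕ) (a : ℤ × ℤ) : Matrix (ZMod d × ZMod d) (ZMod d × ZMod d) ℂ :=
  Matrix.kroneckerMap (· * ·) (T d a) (T d a)

/-- Discrete Fourier transform matrix. -/
noncomputable def Fdft (d : ℕ) : Matrix (ZMod d) (ZMod d) ℂ :=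
  Matrix.of fun i j => ((1 / Real.sqrt d : ℝ) : ℂ) * ww d ^ (i.val * j.val)

/-- The vector `|0⟩ ⊗ F|0⟩`. -/
noncomputable def b0 (d : ℕ) : ZMod d × ZMod d → ℂ :=
  fun p => (if p.1 = 0 then 1 else 0) * Fdft d p.2 0

/-- Partial trace over the first factor of `|v⟩⟨v|`. -/
noncomputable def ptrace1 (d : ℕ) [NeZero d] (v : ZMod d × ZMod d → ℂ) :
    Matrix (ZMod d) (ZMod d) ℂ :=
  Matrix.of fun j l => ∑ i, v (i, j) * star (v (i, l))

/-- tensor square of a vector -/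
noncomputable def tp {d : ℕ} (f : ZMod d → ℂ) : ZMod d × ZMod d → ℂ :=
  fun p => f p.1 * f p.2

/-- `b` is a fiducial vector of a WH-type basis. -/
def IsWHFiducial (d : ℕ) [NeZero d] (b : ZMod d × ZMod d → ℂ) : Prop :=
  dotc b b = 1 ∧ ∀ a : Fin d × Fin d, ((a.1 : ℕ), (a.2 : ℕ)) ≠ (0, 0) →
    dotc b ((TT d (fz a)).mulVec b) = 0

noncomputable def Cm (d : ℕ) : Matrix (ZMod d) (ZMod d) ℂ :=
  Matrix.of fun i j => if i = j then ww d ^ (i.val) else 0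

noncomputable def Sm (d : ℕ) : Matrix (ZMod d) (ZMod d) ℂ :=
  Matrix.of fun i j => if i = j + 1 then 1 else 0

/-- `(1/√2)(|j⟩|j+i⟩ ± |j+i⟩|j⟩)` (up to normalization), sign `s`. -/
noncomputable def symVec (d : ℕ) (i s : ℤ) (j : ZMod d) : ZMod d × ZMod d → ℂ :=
  fun p => (if p = (j, j + (i : ZMod d)) then 1 else 0) +
    (s : ℂ) * (if p = (j + (i : ZMod d), j) then 1 else 0)

/-- The invariant subspace `H_{±i}`. -/
noncomputable def Hsub (d : ℕ) (i s : ℤ) : Submodule ℂ (ZMod d × ZMod d → ℂ) :=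
  Submodule.span ℂ (Set.range (symVec d i s))

/-- The swap operator on `ℂ^d ⊗ ℂ^d`. -/
def swapL (d : ℕ) : (ZMod d × ZMod d → ℂ) →ₗ[ℂ] (ZMod d × ZMod d → ℂ) where
  toFun v := fun p => v (p.2, p.1)
  map_add' _ _ := rfl
  map_smul' _ _ := rfl

/-- `H_t` for `t ∈ [-(d-1)/2 .. (d-1)/2]` (d odd). -/
noncomputable def Hodd (d : ℕ) (t : ℤ) : Submodule ℂ (ZMod d × ZMod d → ℂ) :=
  if 0 ≤ t then Hsub d t 1 else Hsub d (-t) (-1)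


lemma zero_of_trace (n : Type*) [Fintype n] [DecidableEq n] (M : Matrix n n ℂ)
    (h : Matrix.trace (Mᴴ * M) = 0) : M = 0 := by
  have h1 : ((∑ p : n × n, Complex.normSq (M p.1 p.2) : ℝ) : ℂ) = 0 := by
    rw [← h]
    simp only [Matrix.trace, Matrix.diag, Matrix.mul_apply, Matrix.conjTranspose_apply]
    push_cast
    rw [Fintype.sum_prod_type]
    rw [Finset.sum_comm]
    exact Finset.sum_congr rfl fun j _ => Finset.sum_congr rfl fun i _ => by
      rw [Complex.normSq_eq_conj_mul_self]; rfl
  have h2 : ∑ p : n × n, Complex.normSq (M p.1 p.2) = 0 := by exact_mod_cast h1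
  ext i j
  have := (Finset.sum_eq_zero_iff_of_nonneg (fun p _ => Complex.normSq_nonneg (M p.1 p.2))).mp h2 (i, j) (Finset.mem_univ _)
  simpa using Complex.normSq_eq_zero.mp this

lemma trace_vvww {n : Type*} [Fintype n] [DecidableEq n] (v w : n → ℂ) :
    Matrix.trace (Matrix.vecMulVec v (star v) * Matrix.vecMulVec w (star w)) =
      star (dotc v w) * dotc v w := by
  have hst : star (dotc v w) = ∑ p, v p * star (w p) := by
    unfold dotc
    rw [star_sum]
    exact Finset.sum_congr rfl fun p _ => by rw [StarMul.star_mul, star_star]; ring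
  rw [hst]
  simp only [Matrix.trace, Matrix.diag, Matrix.mul_apply, Matrix.vecMulVec_apply,
    Pi.star_apply, dotc, Finset.sum_mul_sum]
  exact Finset.sum_congr rfl fun p _ => Finset.sum_congr rfl fun r _ => by ring

lemma dotc_tp {d : ℕ} [NeZero d] (v w : ZMod d → ℂ) : dotc (tp v) (tp w) = dotc v w * dotc v w := by
  simp only [dotc, tp, Finset.sum_mul_sum, Fintype.sum_prod_type]
  exact Finset.sum_congr rfl fun a _ => Finset.sum_congr rfl fun b _ => by
    rw [StarMul.star_mul]; ring

lemma psym_herm (d : ℕ) [NeZero d] : (Psym d)ᴴ = Psym d := by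
  ext p q
  have h2 : (q = (p.2, p.1)) = (p = (q.2, q.1)) := by
    simp [Prod.ext_iff, and_comm, eq_comm]
  simp [Matrix.conjTranspose_apply, Psym, apply_ite (star : ℂ → ℂ), h2, eq_comm]

lemma psym_mul_psym (d : ℕ) [NeZero d] : Psym d * Psym d = Psym d := by
  ext p q
  simp only [Matrix.mul_apply, Psym, Matrix.of_apply]
  have e1 : ∀ r : ZMod d × ZMod d, (if p = r then (1:ℂ) else 0) = if r = p then 1 else 0 :=
    fun r => by rw [if_congr eq_comm rfl rfl]
  have e2 : ∀ r : ZMod d × ZMod d,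
      (if p = (r.2, r.1) then (1:ℂ) else 0) = if r = (p.2, p.1) then 1 else 0 :=
    fun r => by
      rw [if_congr (show (p = (r.2, r.1)) ↔ (r = (p.2, p.1)) by
        simp [Prod.ext_iff, and_comm, eq_comm]) rfl rfl]
  simp only [e1, e2]
  simp only [mul_add, add_mul, mul_ite, ite_mul, mul_one, one_mul, mul_zero, zero_mul,
    Finset.sum_add_distrib, Finset.sum_ite_eq', Finset.mem_univ, if_true]
  rw [show ((q.1, q.2) : ZMod d × ZMod d) = q from rfl]
  by_cases h1 : q = p <;> by_cases h2 : (q.2, q.1) = p <;> simp_all <;> norm_num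

lemma vvherm {n : Type*} [Fintype n] [DecidableEq n] (v : n → ℂ) :
    (Matrix.vecMulVec v (star v))ᴴ = Matrix.vecMulVec v (star v) := by
  ext p q
  simp only [Matrix.conjTranspose_apply, Matrix.vecMulVec_apply, Pi.star_apply,
    StarMul.star_mul, star_star]

lemma trace_psym (d : ℕ) [NeZero d] : Matrix.trace (Psym d) = ((d : ℂ) * d + d) / 2 := by
  have hcond : ∀ p : ZMod d × ZMod d, (p = (p.2, p.1)) = (p.1 = p.2) := fun p =>
    propext ⟨fun h => (Prod.ext_iff.mp h).1, fun h => Prod.ext_iff.mpr ⟨h, h.symm⟩⟩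
  have hsum : ∑ p : ZMod d × ZMod d, (if p.1 = p.2 then (1:ℂ) else 0) = d := by
    rw [Fintype.sum_prod_type]
    simp [Finset.sum_ite_eq, ZMod.card]
  simp only [Matrix.trace, Matrix.diag, Psym, Matrix.of_apply, hcond, eq_self_iff_true, if_true]
  rw [Finset.sum_congr rfl (fun p _ => mul_add (1/2 : ℂ) 1 _), Finset.sum_add_distrib,
    Finset.sum_const, ← Finset.mul_sum, hsum]
  simp only [Finset.card_univ, Fintype.card_prod, ZMod.card, nsmul_eq_mul, mul_one]
  push_cast
  ring

lemma trace_vv_psym {d : ℕ} [NeZero d] (v : ZMod d × ZMod d → ℂ)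
    (hs : ∀ p : ZMod d × ZMod d, v (p.2, p.1) = v p) :
    Matrix.trace (Matrix.vecMulVec v (star v) * Psym d) = dotc v v := by
  simp only [Matrix.trace, Matrix.diag, Matrix.mul_apply, Matrix.vecMulVec_apply, Psym,
    Matrix.of_apply, Pi.star_apply]
  simp only [mul_add, mul_ite, mul_one, mul_zero, Finset.sum_add_distrib,
    Finset.sum_ite_eq', Finset.mem_univ, if_true]
  unfold dotc
  rw [← Finset.sum_add_distrib]
  refine Finset.sum_congr rfl fun p _ => ?_
  rw [hs p]
  ring


theorem stmt5 (d : ℕ) [NeZero d] (f : Fin (d * d) → ZMod d → ℂ)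
    (hnorm : ∀ i, dotc (f i) (f i) = 1)
    (hang : ∀ i j, i ≠ j → ‖dotc (f i) (f j)‖ ^ 2 = 1 / ((d : ℝ) + 1))
    (hres : (d : ℂ)⁻¹ • ∑ i, Matrix.vecMulVec (f i) (star (f i)) = 1) :
    ((d : ℂ) * d)⁻¹ • ∑ i, Matrix.vecMulVec (tp (f i)) (star (tp (f i)))
      = (2 / ((d : ℂ) * ((d : ℂ) + 1))) • Psym d := by
  classical
  have hd : (d : ℂ) ≠ 0 := Nat.cast_ne_zero.mpr (NeZero.ne d)
  have hd1 : (d : ℂ) + 1 ≠ 0 := by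
    have h := Nat.cast_ne_zero (R := ℂ).mpr (Nat.succ_ne_zero d)
    push_cast at h
    exact h
  set c : ℂ := 2 * d / (d + 1) with hc
  set w : ℂ := (1 / ((d : ℂ) + 1)) ^ 2 with hw
  set A : Matrix (ZMod d × ZMod d) (ZMod d × ZMod d) ℂ :=
    ∑ i, Matrix.vecMulVec (tp (f i)) (star (tp (f i))) with hA
  have hAh : Aᴴ = A := by
    rw [hA, Matrix.conjTranspose_sum]
    exact Finset.sum_congr rfl fun i _ => vvherm _
  have hcc : star c = c := by
    rw [hc]
    simp [Complex.star_def, map_div₀]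
  -- trace of Vi * Vj
  have hterm : ∀ i j : Fin (d * d),
      Matrix.trace (Matrix.vecMulVec (tp (f i)) (star (tp (f i))) *
        Matrix.vecMulVec (tp (f j)) (star (tp (f j)))) = if i = j then 1 else w := by
    intro i j
    rw [trace_vvww, dotc_tp, StarMul.star_mul]
    by_cases h : i = j
    · subst h; rw [hnorm i]; simp
    · have h1 : star (dotc (f i) (f j)) * dotc (f i) (f j) = 1 / ((d : ℂ) + 1) := by
        rw [Complex.star_def, ← Complex.normSq_eq_conj_mul_self, ← Complex.sq_norm,
          hang i j h]
        push_cast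
        ring
      rw [if_neg h, hw]
      calc star (dotc (f i) (f j)) * star (dotc (f i) (f j)) *
            (dotc (f i) (f j) * dotc (f i) (f j))
          = (star (dotc (f i) (f j)) * dotc (f i) (f j)) *
            (star (dotc (f i) (f j)) * dotc (f i) (f j)) := by ring
        _ = (1 / ((d : ℂ) + 1)) ^ 2 := by rw [h1]; ring
  have hN : (Fintype.card (Fin (d * d)) : ℂ) = (d : ℂ) * d := by
    simp [Fintype.card_fin]
  have hAA : Matrix.trace (A * A) =
      ((d:ℂ)*d) * (((d:ℂ)*d) * w + 1 - w) := by
    rw [hA, Matrix.sum_mul]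
    rw [Matrix.trace_sum]
    have : ∀ i : Fin (d * d), Matrix.trace
        (Matrix.vecMulVec (tp (f i)) (star (tp (f i))) * ∑ j, Matrix.vecMulVec (tp (f j)) (star (tp (f j))))
        = ((d:ℂ)*d) * w + 1 - w := by
      intro i
      rw [Matrix.mul_sum, Matrix.trace_sum]
      rw [Finset.sum_congr rfl (fun j _ => hterm i j)]
      rw [Finset.sum_congr rfl (fun j _ =>
        (by split_ifs <;> ring : (if i = j then (1:ℂ) else w) = w + (if i = j then 1 - w else 0)))]
      rw [Finset.sum_add_distrib, Finset.sum_const, Finset.sum_ite_eq, if_pos (Finset.mem_univ i)]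
      rw [Finset.card_univ]
      rw [nsmul_eq_mul, hN]
      ring
    rw [Finset.sum_congr rfl (fun i _ => this i), Finset.sum_const, Finset.card_univ,
      nsmul_eq_mul, hN]
  have hsym : ∀ (i : Fin (d * d)) (p : ZMod d × ZMod d), tp (f i) (p.2, p.1) = tp (f i) p := by
    intro i p
    simp only [tp]
    ring
  have hAP : Matrix.trace (A * Psym d) = (d:ℂ) * d := by
    rw [hA, Matrix.sum_mul, Matrix.trace_sum]
    rw [Finset.sum_congr rfl (fun i _ => trace_vv_psym _ (hsym i))]
    rw [Finset.sum_congr rfl (fun i _ => by rw [dotc_tp, hnorm i, one_mul])]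
    rw [Finset.sum_const, Finset.card_univ, nsmul_eq_mul, hN, mul_one]
  have hPA : Matrix.trace (Psym d * A) = (d:ℂ) * d := by
    rw [Matrix.trace_mul_comm]; exact hAP
  have hQ : A - c • Psym d = 0 := by
    apply zero_of_trace
    have hQh : (A - c • Psym d)ᴴ = A - c • Psym d := by
      rw [Matrix.conjTranspose_sub, hAh, Matrix.conjTranspose_smul, psym_herm, hcc]
    rw [hQh, Matrix.sub_mul, Matrix.mul_sub, Matrix.mul_sub, Matrix.smul_mul, Matrix.smul_mul,
      Matrix.mul_smul, Matrix.mul_smul, psym_mul_psym]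
    simp only [Matrix.trace_sub, Matrix.trace_smul]
    rw [hAA, hAP, hPA, trace_psym]
    simp only [smul_eq_mul, hc, hw]
    field_simp
    ring
  have hA0 : A = c • Psym d := sub_eq_zero.mp hQ
  rw [hA0, smul_smul]
  congr 1
  rw [hc]
  field_simp
end

section
/- Suppose {|f_i⟩}_{i=1}^{d²} are unit vectors in ℂ^d forming a tight frame on ℂ^d, and {|f_i⟩⊗|f_i⟩}_{i=1}^{d²} forms a tight frame on the symmetric subspace of ℂ^d⊗ℂ^d. Then {|f_i⟩} is a SIC, i.e. |⟨f_i|f_j⟩|² = 1/(d+1) for all i ≠ j. -/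
open Matrix Complex BigOperators

lemma star_dotc {α : Type*} [Fintype α] (v w : α → ℂ) : star (dotc v w) = dotc w v := by
  simp [dotc, mul_comm]

lemma frame_sum {n : ℕ} {α : Type*} [Fintype α] (g : Fin n → α → ℂ) (M : Matrix α α ℂ)
    (h : ∑ i, Matrix.vecMulVec (g i) (star (g i)) = M) (v : α → ℂ) :
    ∑ i, dotc v (g i) * dotc (g i) v = ∑ a, ∑ b, star (v a) * v b * M a b := by
  have he : ∀ a b, ∑ i, g i a * star (g i b) = M a b := by
    intro a b
    have := congrFun (congrFun h a) b
    simpa [Matrix.sum_apply, Matrix.vecMulVec_apply] using this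
  have step : ∀ i, dotc v (g i) * dotc (g i) v
      = ∑ a, ∑ b, star (v a) * v b * (g i a * star (g i b)) := by
    intro i
    simp only [dotc]; rw [Finset.sum_mul_sum]
    apply Finset.sum_congr rfl; intro a _
    apply Finset.sum_congr rfl; intro b _
    ring
  rw [Finset.sum_congr rfl (fun i _ => step i), Finset.sum_comm]
  apply Finset.sum_congr rfl; intro a _
  rw [Finset.sum_comm]
  apply Finset.sum_congr rfl; intro b _
  rw [← Finset.mul_sum, he]

lemma quad_one {α : Type*} [Fintype α] [DecidableEq α] (v : α → ℂ) (c : ℂ) :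
    ∑ a, ∑ b, star (v a) * v b * (c • (1 : Matrix α α ℂ)) a b = c * dotc v v := by
  simp only [Matrix.smul_apply, Matrix.one_apply, smul_eq_mul, mul_ite, mul_one, mul_zero,
    Finset.sum_ite_eq, Finset.mem_univ, if_true]
  rw [dotc, Finset.mul_sum]
  apply Finset.sum_congr rfl; intro a _; ring

lemma quad_Psym {d : ℕ} [NeZero d] (u : ZMod d × ZMod d → ℂ)
    (hu : ∀ q : ZMod d × ZMod d, u (q.2, q.1) = u q) (c : ℂ) :
    ∑ p, ∑ q, star (u p) * u q * (c • Psym d) p q = c * dotc u u := by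
  have h2 : ∀ p q : ZMod d × ZMod d, (p = (q.2, q.1)) ↔ (q = (p.2, p.1)) := by
    rintro ⟨p1, p2⟩ ⟨q1, q2⟩; simp only [Prod.ext_iff]; constructor <;> (rintro ⟨h1, h2⟩; simp_all)
  simp only [Matrix.smul_apply, Psym, Matrix.of_apply, smul_eq_mul]
  simp only [h2]
  simp only [mul_add, add_mul, mul_ite, mul_one, mul_zero, Finset.sum_add_distrib,
    Finset.sum_ite_eq, Finset.sum_ite_eq', Finset.mem_univ, if_true, hu]
  rw [dotc, Finset.mul_sum, ← Finset.sum_add_distrib]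
  apply Finset.sum_congr rfl; intro p _; ring

lemma trace_Psym (d : ℕ) [NeZero d] : (Psym d).trace = ((d : ℂ) * d + d) / 2 := by
  simp only [Matrix.trace, Matrix.diag, Psym, Matrix.of_apply]
  rw [Fintype.sum_prod_type]
  have : ∀ a b : ZMod d, ((a, b) = (b, a)) ↔ (b = a) := by
    intro a b; exact ⟨fun h => (Prod.ext_iff.1 h).2, fun h => by subst h; rfl⟩
  simp only [if_pos rfl, this]
  simp only [Finset.mul_sum, mul_add, mul_one, mul_ite, mul_zero, Finset.sum_add_distrib,
    Finset.sum_ite_eq', Finset.mem_univ, if_true, Finset.sum_const, Finset.card_univ,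
    ZMod.card, nsmul_eq_mul]
  ring

lemma star_mul_self_c (z : ℂ) : star z * z = (Complex.normSq z : ℂ) := by
  rw [mul_comm, Complex.star_def, Complex.mul_conj]

theorem stmt6 (d : ℕ) [NeZero d] (f : Fin (d * d) → ZMod d → ℂ)
    (hnorm : ∀ i, dotc (f i) (f i) = 1)
    (B : ℝ) (hB : ∑ i, Matrix.vecMulVec (f i) (star (f i)) = (B : ℂ) • 1)
    (B₂ : ℝ)
    (hB₂ : ∑ i, Matrix.vecMulVec (tp (f i)) (star (tp (f i))) = (B₂ : ℂ) • Psym d) :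
    ∀ i j, i ≠ j → ‖dotc (f i) (f j)‖ ^ 2 = 1 / ((d : ℝ) + 1) := by
  intro i j hij
  have hd1 : 1 ≤ d := Nat.one_le_iff_ne_zero.2 (NeZero.ne d)
  set D : ℝ := (d : ℝ) with hD
  have hD1 : (1:ℝ) ≤ D := by rw [hD]; exact_mod_cast hd1
  have key1 : ∀ k, ∑ l, (Complex.normSq (dotc (f l) (f k)) : ℂ) = (B : ℂ) := by
    intro k
    have h := frame_sum f _ hB (f k)
    rw [quad_one, hnorm, mul_one] at h
    rw [← h]
    apply Finset.sum_congr rfl; intro l _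
    rw [← star_dotc (f l) (f k), star_mul_self_c]
  have key2 : ∀ k, ∑ l, ((Complex.normSq (dotc (f l) (f k)) : ℂ))^2 = (B₂ : ℂ) := by
    intro k
    have hu : ∀ q : ZMod d × ZMod d, tp (f k) (q.2, q.1) = tp (f k) q := fun q => mul_comm _ _
    have h := frame_sum (fun l => tp (f l)) _ hB₂ (tp (f k))
    rw [quad_Psym _ hu, dotc_tp, hnorm, one_mul, mul_one] at h
    rw [← h]
    apply Finset.sum_congr rfl; intro l _
    rw [dotc_tp, dotc_tp, ← star_dotc (f l) (f k), ← star_mul_self_c]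
    ring
  have hdne : (d:ℂ) ≠ 0 := Nat.cast_ne_zero.2 (NeZero.ne d)
  have htr1 : ((d*d : ℕ) : ℂ) = (B : ℂ) * d := by
    have h := congrArg Matrix.trace hB
    rw [Matrix.trace_sum, Matrix.trace_smul, Matrix.trace_one] at h
    have hl : ∀ l, (Matrix.vecMulVec (f l) (star (f l))).trace = 1 := by
      intro l
      rw [← hnorm l]
      simp [Matrix.trace, Matrix.diag, Matrix.vecMulVec_apply, dotc, mul_comm]
    rw [Finset.sum_congr rfl (fun l _ => hl l)] at h
    simpa [Finset.card_univ, ZMod.card, smul_eq_mul] using h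
  have htr2 : ((d*d : ℕ) : ℂ) = (B₂ : ℂ) * (((d:ℂ)*d + d)/2) := by
    have h := congrArg Matrix.trace hB₂
    rw [Matrix.trace_sum, Matrix.trace_smul, trace_Psym] at h
    have hl : ∀ l, (Matrix.vecMulVec (tp (f l)) (star (tp (f l)))).trace = 1 := by
      intro l
      have e : dotc (tp (f l)) (tp (f l)) = 1 := by rw [dotc_tp, hnorm, one_mul]
      rw [← e]
      simp [Matrix.trace, Matrix.diag, Matrix.vecMulVec_apply, dotc, mul_comm]
    rw [Finset.sum_congr rfl (fun l _ => hl l)] at h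
    simpa [smul_eq_mul] using h
  have hBr : B = D := by
    have h : (B:ℂ) * d = (d:ℂ) * d := by rw [← htr1]; push_cast; ring
    have := mul_right_cancel₀ hdne h
    exact_mod_cast this
  have hB2r : D*D = B₂ * ((D*D + D)/2) := by
    rw [hD]
    have h2c : ((((d:ℝ)*(d:ℝ)):ℝ):ℂ) = ((B₂ * (((d:ℝ)*(d:ℝ) + (d:ℝ))/2):ℝ):ℂ) := by
      push_cast
      push_cast at htr2
      linear_combination htr2
    exact_mod_cast h2c
  set x : Fin (d*d) → ℝ := fun l => Complex.normSq (dotc (f l) (f i)) with hx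
  have h1 : ∑ l, x l = B := by
    have h := key1 i
    rw [hx]; exact_mod_cast h
  have h2 : ∑ l, (x l)^2 = B₂ := by
    have h := key2 i
    rw [hx]; exact_mod_cast h
  have hxi : x i = 1 := by
    simp only [hx]; rw [hnorm i]; exact Complex.normSq_one
  set c : ℝ := 1 / (D + 1) with hc
  have hDpos : (0:ℝ) < D + 1 := by linarith
  have hDne0 : D ≠ 0 := by linarith
  have hDp1ne : D + 1 ≠ 0 := ne_of_gt hDpos
  have hB₂v : B₂ = 2*D/(D+1) := by
    rw [eq_div_iff hDp1ne]
    have h' : D * (B₂*(D+1)) = D*(2*D) := by linear_combination (-2)*hB2r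
    exact mul_left_cancel₀ hDne0 h'
  have hcardZ : ((Finset.univ.erase i).card : ℝ) = D * D - 1 := by
    rw [Finset.card_erase_of_mem (Finset.mem_univ i), Finset.card_univ, Fintype.card_fin]
    have h11 : 1 ≤ d * d := Nat.one_le_iff_ne_zero.2 (by simp [NeZero.ne d])
    push_cast [h11]
    ring
  have hzero : ∑ l ∈ Finset.univ.erase i, (x l - c)^2 = 0 := by
    have ha : x i + ∑ l ∈ Finset.univ.erase i, x l = ∑ l, x l :=
      Finset.add_sum_erase Finset.univ x (Finset.mem_univ i)
    have hb : x i ^ 2 + ∑ l ∈ Finset.univ.erase i, x l ^ 2 = ∑ l, x l ^ 2 :=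
      Finset.add_sum_erase Finset.univ (fun l => (x l)^2) (Finset.mem_univ i)
    have e1 : ∑ l ∈ Finset.univ.erase i, x l = B - 1 := by
      rw [h1] at ha; rw [hxi] at ha; linarith
    have e2 : ∑ l ∈ Finset.univ.erase i, (x l)^2 = B₂ - 1 := by
      rw [h2] at hb; rw [hxi] at hb; nlinarith [hb]
    have expand : ∑ l ∈ Finset.univ.erase i, (x l - c)^2
        = (∑ l ∈ Finset.univ.erase i, (x l)^2) - 2*c*(∑ l ∈ Finset.univ.erase i, x l)
          + ((Finset.univ.erase i).card : ℝ) * c^2 := by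
      have hcg : ∀ l ∈ Finset.univ.erase i, (x l - c)^2 = ((x l)^2 - 2*c*x l) + c^2 :=
        fun l _ => by ring
      rw [Finset.sum_congr rfl hcg, Finset.sum_add_distrib, Finset.sum_const, nsmul_eq_mul,
        Finset.sum_sub_distrib]
      have : ∑ l ∈ Finset.univ.erase i, 2*c*x l = 2*c*∑ l ∈ Finset.univ.erase i, x l := by
        rw [Finset.mul_sum]
      rw [this]
    rw [expand, e1, e2, hcardZ, hBr, hB₂v, hc]
    field_simp
    ring
  have hjmem : j ∈ Finset.univ.erase i := Finset.mem_erase.2 ⟨hij.symm, Finset.mem_univ j⟩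
  have hterm := (Finset.sum_eq_zero_iff_of_nonneg
    (fun l _ => sq_nonneg (x l - c))).1 hzero j hjmem
  have hxj : x j = c := by
    have := sq_eq_zero_iff.1 hterm
    linarith [this]
  rw [Complex.sq_norm]
  have hfin : Complex.normSq (dotc (f i) (f j)) = x j := by
    simp only [hx]
    rw [← star_dotc (f i) (f j), Complex.star_def, Complex.normSq_conj]
  rw [hfin, hxj, hc]
end

section
/- The projector onto the symmetric subspace of ℂ^d⊗ℂ^d satisfies P_sym = ((d+1)/(2d)) ( I + (1/(d+1)) ∑_{a∈[0..d-1]², a≠(0,0)} T_a ⊗ T_{-a} ). -/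
open Matrix Complex BigOperators

lemma ww_ne (d : ℕ) : ww d ≠ 0 := Complex.exp_ne_zero _
lemma tt_ne (d : ℕ) : tt d ≠ 0 := Complex.exp_ne_zero _

lemma ww_prim (d : ℕ) [NeZero d] : IsPrimitiveRoot (ww d) d :=
  Complex.isPrimitiveRoot_exp d (NeZero.ne d)

lemma tt_sq (d : ℕ) [NeZero d] : tt d ^ (2:ℕ) = ww d := by
  have hd : (d:ℂ) ≠ 0 := Nat.cast_ne_zero.2 (NeZero.ne d)
  rw [tt, ww, ← Complex.exp_nat_mul]
  rw [show ((2:ℕ):ℂ) * (2 * Real.pi * Complex.I * (d + 1) / (2 * d)) =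
      2*Real.pi*Complex.I + 2*Real.pi*Complex.I/d by push_cast; field_simp]
  rw [Complex.exp_add, Complex.exp_two_pi_mul_I, one_mul]

lemma geom' (d : ℕ) [NeZero d] (m : ℤ) :
    ∑ a : Fin d, ww d ^ (((a:ℕ):ℤ) * m) = if (m : ZMod d) = 0 then (d:ℂ) else 0 := by
  have hprim := ww_prim d
  have hterm : ∀ a : Fin d, ww d ^ (((a:ℕ):ℤ) * m) = (ww d ^ m) ^ ((a:ℕ)) := by
    intro a; rw [mul_comm, _root_.zpow_mul, ← zpow_natCast]
  simp only [hterm]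
  rw [Fin.sum_univ_eq_sum_range (fun i => (ww d ^ m) ^ i)]
  by_cases hm : (m : ZMod d) = 0
  · have h1 : ww d ^ m = 1 :=
      (hprim.zpow_eq_one_iff_dvd m).2 ((ZMod.intCast_zmod_eq_zero_iff_dvd m d).1 hm)
    simp [hm, h1]
  · have h1 : ww d ^ m ≠ 1 := fun h =>
      hm ((ZMod.intCast_zmod_eq_zero_iff_dvd m d).2 ((hprim.zpow_eq_one_iff_dvd m).1 h))
    have hD : (ww d ^ m) ^ d = 1 := by
      rw [← zpow_natCast, ← _root_.zpow_mul, mul_comm, _root_.zpow_mul, zpow_natCast,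
        hprim.pow_eq_one, _root_.one_zpow]
    rw [geom_sum_eq h1, hD]
    simp [hm]

lemma hterm (d : ℕ) [NeZero d] (a1 a2 : Fin d) (p q : ZMod d × ZMod d) :
    T d (fz (a1,a2)) p.1 q.1 * T d (-(fz (a1,a2))) p.2 q.2 =
    (if p.1 = q.1 + ((a1:ℕ):ZMod d) ∧ p.2 = q.2 - ((a1:ℕ):ZMod d) then
      ww d ^ (((a2:ℕ):ℤ) * (((a1:ℕ):ℤ) + (q.1.val:ℤ) - (q.2.val:ℤ))) else 0) := by
  simp only [T, fz, Matrix.of_apply, Prod.fst_neg, Prod.snd_neg]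
  have e1 : ((-((a1:ℕ):ℤ) : ℤ) : ZMod d) = -(((a1:ℕ):ZMod d)) := by push_cast; ring
  have e2 : (((a1:ℕ):ℤ) : ZMod d) = ((a1:ℕ):ZMod d) := by push_cast; ring
  simp only [e1, e2, ← sub_eq_add_neg]
  by_cases h1 : p.1 = q.1 + ((a1:ℕ):ZMod d) <;> by_cases h2 : p.2 = q.2 - ((a1:ℕ):ZMod d) <;>
    simp only [h1, h2, if_pos, if_neg, if_true, if_false, and_self, and_true, true_and,
      mul_zero, zero_mul, if_pos rfl]
  · rw [show -((a1:ℕ):ℤ) * -((a2:ℕ):ℤ) = ((a1:ℕ):ℤ) * ((a2:ℕ):ℤ) by ring]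
    have htt : tt d ^ (((a1:ℕ):ℤ) * ((a2:ℕ):ℤ)) * tt d ^ (((a1:ℕ):ℤ) * ((a2:ℕ):ℤ)) =
        ww d ^ (((a1:ℕ):ℤ) * ((a2:ℕ):ℤ)) := by
      rw [← zpow_add₀ (tt_ne d),
        show ((a1:ℕ):ℤ) * ((a2:ℕ):ℤ) + ((a1:ℕ):ℤ) * ((a2:ℕ):ℤ) = 2 * (((a1:ℕ):ℤ) * ((a2:ℕ):ℤ)) by ring,
        _root_.zpow_mul, show (tt d)^(2:ℤ) = ww d from by
          rw [show (2:ℤ) = ((2:ℕ):ℤ) from rfl, zpow_natCast, tt_sq]]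
    rw [mul_mul_mul_comm, htt, ← zpow_add₀ (ww_ne d), ← zpow_add₀ (ww_ne d)]
    congr 1; ring

lemma huniv (d : ℕ) [NeZero d] (p q : ZMod d × ZMod d) :
    ∑ a : Fin d × Fin d, T d (fz a) p.1 q.1 * T d (-(fz a)) p.2 q.2 =
      (d:ℂ) * (if p = (q.2, q.1) then 1 else 0) := by
  rw [Fintype.sum_prod_type]
  have hc : ∀ a1 : Fin d,
      (((((a1:ℕ):ℤ) + (q.1.val:ℤ) - (q.2.val:ℤ)) : ℤ) : ZMod d) = 0 ↔
      ((a1:ℕ):ZMod d) = q.2 - q.1 := by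
    intro a1
    have e : (((((a1:ℕ):ℤ) + (q.1.val:ℤ) - (q.2.val:ℤ)) : ℤ) : ZMod d) =
        ((a1:ℕ):ZMod d) + q.1 - q.2 := by
      push_cast [ZMod.natCast_val, ZMod.cast_id]; ring
    rw [e, sub_eq_zero]
    exact ⟨fun h => by rw [eq_sub_iff_add_eq]; exact h, fun h => by rw [← eq_sub_iff_add_eq]; exact h⟩
  calc ∑ a1 : Fin d, ∑ a2 : Fin d, T d (fz (a1,a2)) p.1 q.1 * T d (-(fz (a1,a2))) p.2 q.2
      = ∑ a1 : Fin d, (if p.1 = q.1 + ((a1:ℕ):ZMod d) ∧ p.2 = q.2 - ((a1:ℕ):ZMod d) then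
          (if ((a1:ℕ):ZMod d) = q.2 - q.1 then (d:ℂ) else 0) else 0) := by
        refine Finset.sum_congr rfl fun a1 _ => ?_
        simp only [hterm d a1]
        split
        · rw [geom' d, if_congr (hc a1) rfl rfl]
        · simp
    _ = (d:ℂ) * (if p = (q.2, q.1) then 1 else 0) := by
        by_cases hp : p = (q.2, q.1)
        · rw [if_pos hp, mul_one]
          have hpv : p.1 = q.2 ∧ p.2 = q.1 := by rw [hp]; exact ⟨rfl, rfl⟩
          rw [Finset.sum_eq_single (⟨(q.2 - q.1).val, ZMod.val_lt _⟩ : Fin d)]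
          · have hv : (((((⟨(q.2 - q.1).val, ZMod.val_lt _⟩ : Fin d)):ℕ)):ZMod d) = q.2 - q.1 := by
              simp [ZMod.natCast_val, ZMod.cast_id]
            rw [hv, if_pos rfl, if_pos ⟨by rw [hpv.1]; ring, by rw [hpv.2]; ring⟩]
          · intro b _ hb
            by_cases hcm : ((b:ℕ):ZMod d) = q.2 - q.1
            · exfalso
              apply hb
              apply Fin.ext
              have : ((b:ℕ):ZMod d).val = (q.2 - q.1).val := by rw [hcm]
              rwa [ZMod.val_cast_of_lt b.isLt] at this
            · rw [if_neg hcm]; simp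
          · intro h; exact absurd (Finset.mem_univ _) h
        · rw [if_neg hp, mul_zero]
          refine Finset.sum_eq_zero fun b _ => ?_
          split_ifs with h1 h2
          · exfalso
            exact hp (Prod.ext (by rw [h1.1, h2]; ring) (by rw [h1.2, h2]; ring))
          · rfl
          · rfl

theorem stmt11 (d : ℕ) [NeZero d] :
    Psym d = (((d : ℂ) + 1) / (2 * d)) •
      ((1 : Matrix (ZMod d × ZMod d) (ZMod d × ZMod d) ℂ) +
        ((d : ℂ) + 1)⁻¹ •
          ∑ a ∈ Finset.univ.filter (fun a : Fin d × Fin d => ((a.1 : ℕ), (a.2 : ℕ)) ≠ (0, 0)),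
            Matrix.kroneckerMap (· * ·) (T d (fz a)) (T d (-(fz a)))) := by
  have hd : (d:ℂ) ≠ 0 := Nat.cast_ne_zero.2 (NeZero.ne d)
  have hd1 : (d:ℂ) + 1 ≠ 0 := by
    have : ((d+1:ℕ):ℂ) ≠ 0 := Nat.cast_ne_zero.2 d.succ_ne_zero
    push_cast at this; exact this
  have hfilter : Finset.univ.filter (fun a : Fin d × Fin d => ((a.1 : ℕ), (a.2 : ℕ)) ≠ (0, 0)) =
      Finset.univ.erase ((0 : Fin d), (0 : Fin d)) := by
    ext a
    simp only [Finset.mem_filter, Finset.mem_univ, true_and, Finset.mem_erase, and_true, ne_eq,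
      Prod.ext_iff, Fin.ext_iff, Fin.val_zero]
  ext p q
  have h00 : T d (fz ((0:Fin d),(0:Fin d))) p.1 q.1 * T d (-(fz ((0:Fin d),(0:Fin d)))) p.2 q.2 =
      if p = q then 1 else 0 := by
    rw [hterm]
    by_cases h1 : p.1 = q.1 <;> by_cases h2 : p.2 = q.2 <;>
      simp [h1, h2, Prod.ext_iff]
  have hsum : ∑ a ∈ Finset.univ.filter (fun a : Fin d × Fin d => ((a.1 : ℕ), (a.2 : ℕ)) ≠ (0, 0)),
      T d (fz a) p.1 q.1 * T d (-(fz a)) p.2 q.2 =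
      (d:ℂ) * (if p = (q.2, q.1) then 1 else 0) - (if p = q then 1 else 0) := by
    rw [hfilter, Finset.sum_erase_eq_sub (Finset.mem_univ _), huniv, h00]
  simp only [Psym, Matrix.of_apply, Matrix.smul_apply, Matrix.add_apply, Matrix.one_apply,
    Matrix.sum_apply, Matrix.kroneckerMap_apply, smul_eq_mul]
  rw [hsum]
  by_cases h1 : p = q <;> by_cases h2 : p = (q.2, q.1)
  · rw [if_pos h1, if_pos h2]; field_simp; ring
  · rw [if_pos h1, if_neg h2]; field_simp; ring
  · rw [if_neg h1, if_pos h2]; field_simp; ring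
  · rw [if_neg h1, if_neg h2]; field_simp; ring
end

section
/- The partial trace over the first factor of |v⟩⟨v|, where |v⟩ = P_sym(|0⟩⊗F|0⟩), is a matrix of rank 2. Hence the Schmidt rank of P_sym(|0⟩⊗F|0⟩) equals 2 (for d ≥ 2). -/
open Matrix Complex BigOperators

/- ## Auxiliary lemmas for `stmt12` -/

noncomputable def dl (d : ℕ) : ZMod d → ℂ := fun j => if j = 0 then 1 else 0

noncomputable def vfun (d : ℕ) : ZMod d → ℂ := fun j => 1 + dl d j

lemma wlem (d : ℕ) [NeZero d] : (Psym d).mulVec (b0 d) =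
    fun p => ((1/(2*Real.sqrt d) : ℝ) : ℂ) * (dl d p.1 + dl d p.2) := by
  funext p
  have hb : ∀ q : ZMod d × ZMod d, b0 d q = ((1/Real.sqrt d : ℝ):ℂ) * dl d q.1 := by
    intro q; simp [b0, Fdft, dl, ZMod.val_zero, mul_comm]
  have h2 : ∀ q : ZMod d × ZMod d,
      Psym d p q * b0 d q
      = (1/2:ℂ)*((1/Real.sqrt d:ℝ):ℂ) *
        ((if q = p then dl d q.1 else 0) + (if q = (p.2, p.1) then dl d q.1 else 0)) := by
    intro q
    have e1 : (p = q) = (q = p) := by simp [eq_comm]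
    have e2 : (p = (q.2, q.1)) = (q = (p.2, p.1)) := by
      rcases p with ⟨p1, p2⟩; rcases q with ⟨q1, q2⟩
      simp [Prod.ext_iff]; tauto
    rw [hb, Psym]
    simp only [Matrix.of_apply, e1, e2]
    split_ifs <;> ring
  show ∑ q, Psym d p q * b0 d q = _
  rw [Finset.sum_congr rfl (fun q _ => h2 q), ← Finset.mul_sum, Finset.sum_add_distrib]
  simp only [Finset.sum_ite_eq, Finset.sum_ite_eq', Finset.mem_univ, if_true]
  push_cast
  ring

lemma key (d : ℕ) [NeZero d] : ptrace1 d ((Psym d).mulVec (b0 d)) =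
    Matrix.of (fun j l => ((1/(4*(d:ℝ)) : ℝ):ℂ) *
      (vfun d j * vfun d l + ((d:ℂ)-1)*(dl d j * dl d l))) := by
  have hdl : ∀ i : ZMod d, dl d i * dl d i = dl d i := by
    intro i; simp only [dl]; split_ifs <;> ring
  have s2 : ∑ i : ZMod d, dl d i = 1 := by simp [dl]
  have s4 : (Finset.univ : Finset (ZMod d)).card = d := by
    rw [Finset.card_univ, ZMod.card]
  have hstar : ∀ x : ZMod d, star (dl d x) = dl d x := by
    intro x; simp [dl, apply_ite]
  set s : ℂ := ((1/(2*Real.sqrt d) : ℝ) : ℂ) with hs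
  have hss : s * s = ((1/(4*(d:ℝ)) : ℝ):ℂ) := by
    rw [hs, ← Complex.ofReal_mul]
    congr 1
    rw [div_mul_div_comm, one_mul]
    congr 1
    rw [mul_mul_mul_comm, Real.mul_self_sqrt (by positivity)]
    ring
  ext j l
  show ∑ i, ((Psym d).mulVec (b0 d)) (i, j) * star (((Psym d).mulVec (b0 d)) (i, l)) = _
  simp only [wlem]
  have hw : ∀ x y : ZMod d,
      star (s * (dl d x + dl d y)) = s * (dl d x + dl d y) := by
    intro x y
    rw [star_mul', star_add, hstar, hstar, hs, Complex.star_def, Complex.conj_ofReal]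
  have hterm : ∀ i : ZMod d,
      s * (dl d i + dl d j) * star (s * (dl d i + dl d l))
      = (s*s) * ((dl d i * dl d i) + dl d i * dl d l + dl d j * dl d i + dl d j * dl d l) := by
    intro i; rw [hw]; ring
  rw [Finset.sum_congr rfl (fun i _ => hterm i), ← Finset.mul_sum]
  simp only [Finset.sum_add_distrib, hdl, s2, ← Finset.sum_mul, ← Finset.mul_sum,
    Finset.sum_const, s4, nsmul_eq_mul]
  rw [hss]
  simp only [Matrix.of_apply, vfun]
  ring

lemma rank2 (d : ℕ) [NeZero d] (hd : 2 ≤ d) :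
    (Matrix.of (fun j l => ((1/(4*(d:ℝ)) : ℝ):ℂ) *
      (vfun d j * vfun d l + ((d:ℂ)-1)*(dl d j * dl d l))) : Matrix (ZMod d) (ZMod d) ℂ).rank
      = 2 := by
  haveI : Fact (1 < d) := ⟨hd⟩
  set c : ℂ := ((1/(4*(d:ℝ)) : ℝ):ℂ) with hc
  have hc0 : c ≠ 0 := by
    rw [hc]
    simp only [ne_eq, Complex.ofReal_eq_zero, div_eq_zero_iff, one_ne_zero, false_or]
    positivity
  have hd1 : ((d:ℂ) - 1) ≠ 0 := by
    rw [sub_ne_zero]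
    intro h
    have : d = 1 := by exact_mod_cast h
    omega
  have h10 : (1 : ZMod d) ≠ 0 := one_ne_zero
  have hv1 : vfun d 1 = 1 := by simp [vfun, dl, h10]
  have he1 : dl d 1 = 0 := by simp [dl, h10]
  have hv0 : vfun d 0 = 2 := by norm_num [vfun, dl]
  have he0 : dl d 0 = 1 := by simp [dl]
  set N : Matrix (ZMod d) (ZMod d) ℂ :=
    Matrix.of (fun j l => c * (vfun d j * vfun d l + ((d:ℂ)-1)*(dl d j * dl d l))) with hN
  have hcol : ∀ l : ZMod d, Nᵀ l = (c * vfun d l) • vfun d + (c * ((d:ℂ)-1) * dl d l) • dl d := by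
    intro l; funext j
    simp only [hN, Matrix.transpose_apply, Matrix.of_apply, Pi.add_apply, Pi.smul_apply,
      smul_eq_mul]
    ring
  have hspan : Submodule.span ℂ (Set.range Nᵀ) = Submodule.span ℂ (Set.range ![vfun d, dl d]) := by
    apply le_antisymm
    · rw [Submodule.span_le]
      rintro _ ⟨l, rfl⟩
      rw [hcol]
      refine Submodule.add_mem _ (Submodule.smul_mem _ _ ?_) (Submodule.smul_mem _ _ ?_)
      · exact Submodule.subset_span ⟨0, rfl⟩
      · exact Submodule.subset_span ⟨1, rfl⟩
    · rw [Submodule.span_le]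
      have hvmem : vfun d ∈ Submodule.span ℂ (Set.range Nᵀ) := by
        have : vfun d = c⁻¹ • Nᵀ 1 := by
          rw [hcol, hv1, he1]
          simp [smul_smul, inv_mul_cancel₀ hc0]
        rw [this]
        exact Submodule.smul_mem _ _ (Submodule.subset_span ⟨1, rfl⟩)
      rintro _ ⟨i, rfl⟩
      fin_cases i
      · exact hvmem
      · have : dl d = (c * ((d:ℂ)-1))⁻¹ • (Nᵀ 0 - (c * 2) • vfun d) := by
          rw [hcol, hv0, he0]
          rw [mul_one, add_sub_cancel_left, smul_smul,
            inv_mul_cancel₀ (mul_ne_zero hc0 hd1), one_smul]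
        simp only [Matrix.cons_val_one, Matrix.head_cons]
        rw [this]
        exact Submodule.smul_mem _ _
          (Submodule.sub_mem _ (Submodule.subset_span ⟨0, rfl⟩) (Submodule.smul_mem _ _ hvmem))
  have hli : LinearIndependent ℂ ![vfun d, dl d] := by
    rw [LinearIndependent.pair_iff]
    intro a b hab
    have h1 := congrFun hab 1
    have h0 := congrFun hab 0
    simp only [Pi.add_apply, Pi.smul_apply, smul_eq_mul, Pi.zero_apply, hv1, he1, hv0, he0,
      mul_one, mul_zero, add_zero] at h1 h0
    constructor
    · exact h1
    · rw [h1] at h0; simpa using h0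
  rw [Matrix.rank_eq_finrank_span_cols, (show Submodule.span ℂ (Set.range N.col) = _ from hspan), finrank_span_eq_card hli]
  simp

theorem stmt12 (d : ℕ) [NeZero d] (hd : 2 ≤ d) :
    (ptrace1 d ((Psym d).mulVec (b0 d))).rank = 2 := by
  rw [key]
  exact rank2 d hd
end

section
/- Assume d odd. For i ∈ [0..(d-1)/2] let H_i ⊂ ℂ^d⊗ℂ^d be spanned by the vectors (1/√2)(|j⟩|j+i⟩ + |j+i⟩|j⟩) (and |j⟩|j⟩ for i=0), j ∈ [0..d-1], indices mod d, and for i ∈ [1..(d-1)/2] let H_{-i} be spanned by (1/√2)(|j⟩|j+i⟩ − |j+i⟩|j⟩). Then each H_i has dimension d, each H_i is invariant under C⊗C and S⊗S, ⊕_{i≥0} H_i = H_sym, and ⊕_{i<0} H_i is the antisymmetric subspace. -/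
open Matrix Complex BigOperators

section Aux

lemma add_self_ne (d : ℕ) [NeZero d] (hd : Odd d) {a : ZMod d} (ha : a ≠ 0) : a + a ≠ 0 := by
  intro h
  apply ha
  have h2 : ((2 * a.val : ℕ) : ZMod d) = 0 := by
    push_cast
    rw [two_mul]
    simpa [ZMod.natCast_val, ZMod.cast_id] using h
  have hdvd : d ∣ 2 * a.val := (ZMod.natCast_eq_zero_iff _ _).mp h2
  rw [mul_comm] at hdvd
  have := (Nat.Coprime.dvd_of_dvd_mul_right (Nat.coprime_two_right.mpr hd) hdvd)
  have : a.val = 0 := Nat.eq_zero_of_dvd_of_lt this (ZMod.val_lt a)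
  rwa [ZMod.val_eq_zero] at this

lemma li_symVec (d : ℕ) [NeZero d] (hd : Odd d) (i s : ℤ)
    (h : (i : ZMod d) ≠ 0 ∨ (1 : ℂ) + (s : ℂ) ≠ 0) :
    LinearIndependent ℂ (symVec d i s) := by
  rw [Fintype.linearIndependent_iff]
  intro c hc j
  have hev := congrFun hc (j, j + (i : ZMod d))
  simp only [Finset.sum_apply, Pi.smul_apply, symVec, smul_eq_mul, Pi.zero_apply] at hev
  rw [Finset.sum_eq_single j] at hev
  · by_cases h0 : (i : ZMod d) = 0
    · have hs : (1 : ℂ) + (s : ℂ) ≠ 0 := h.resolve_left (not_not_intro h0)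
      rw [h0, add_zero] at hev
      simp only [reduceIte, mul_one] at hev
      have hev' : c j * (1 + (s:ℂ)) = 0 := by linear_combination hev
      exact (mul_eq_zero.mp hev').resolve_right hs
    · have h2 : (j, j + (i : ZMod d)) ≠ (j + (i : ZMod d), j) := by
        intro he
        have e1 : j = j + (i : ZMod d) := congrArg Prod.fst he
        exact h0 (by linear_combination -e1)
      rw [if_pos rfl, if_neg h2] at hev
      simpa using hev
  · intro b _ hbj
    have h1 : (j, j + (i : ZMod d)) ≠ (b, b + (i : ZMod d)) := by
      intro he; exact hbj ((congrArg Prod.fst he)).symm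
    have h2 : (j, j + (i : ZMod d)) ≠ (b + (i : ZMod d), b) := by
      intro he
      have e1 : j = b + (i : ZMod d) := congrArg Prod.fst he
      have e2 : j + (i : ZMod d) = b := congrArg Prod.snd he
      by_cases h0 : (i : ZMod d) = 0
      · rw [h0, add_zero] at e1; exact hbj e1.symm
      · exact add_self_ne d hd h0 (by linear_combination e2 - e1)
    simp [h1, h2]
  · intro hj; exact absurd (Finset.mem_univ j) hj

lemma CC_apply (d : ℕ) [NeZero d] (v : ZMod d × ZMod d → ℂ) (p : ZMod d × ZMod d) :
    (Matrix.kroneckerMap (· * ·) (Cm d) (Cm d)).mulVec v p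
      = ww d ^ (p.1.val + p.2.val) * v p := by
  rw [Matrix.mulVec, dotProduct, Finset.sum_eq_single p]
  · simp [Matrix.kroneckerMap, Cm, pow_add]
  · intro b _ hbp
    have : p.1 ≠ b.1 ∨ p.2 ≠ b.2 := by
      by_contra hcon
      push_neg at hcon
      exact hbp (Prod.ext hcon.1.symm hcon.2.symm)
    rcases this with h | h <;> simp [Matrix.kroneckerMap, Cm, h]
  · intro hp; exact absurd (Finset.mem_univ p) hp

lemma SS_apply (d : ℕ) [NeZero d] (v : ZMod d × ZMod d → ℂ) (p : ZMod d × ZMod d) :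
    (Matrix.kroneckerMap (· * ·) (Sm d) (Sm d)).mulVec v p = v (p.1 - 1, p.2 - 1) := by
  rw [Matrix.mulVec, dotProduct, Finset.sum_eq_single (p.1 - 1, p.2 - 1)]
  · simp [Matrix.kroneckerMap, Sm]
  · intro b _ hbp
    have : p.1 ≠ b.1 + 1 ∨ p.2 ≠ b.2 + 1 := by
      by_contra hcon
      push_neg at hcon
      exact hbp (Prod.ext (by rw [hcon.1]; ring) (by rw [hcon.2]; ring))
    rcases this with h | h <;> simp [Matrix.kroneckerMap, Sm, h]
  · intro hp; exact absurd (Finset.mem_univ _) hp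

lemma CC_symVec (d : ℕ) [NeZero d] (i s : ℤ) (j : ZMod d) :
    (Matrix.kroneckerMap (· * ·) (Cm d) (Cm d)).mulVec (symVec d i s j)
      = (ww d ^ (j.val + (j + (i : ZMod d)).val)) • symVec d i s j := by
  funext p
  rw [Pi.smul_apply, smul_eq_mul, CC_apply]
  by_cases h1 : p = (j, j + (i : ZMod d))
  · subst h1; rfl
  · by_cases h2 : p = (j + (i : ZMod d), j)
    · subst h2
      show ww d ^ ((j + (i:ZMod d)).val + j.val) * _ = _
      rw [Nat.add_comm]
    · simp [symVec, h1, h2]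

lemma SS_symVec (d : ℕ) [NeZero d] (i s : ℤ) (j : ZMod d) :
    (Matrix.kroneckerMap (· * ·) (Sm d) (Sm d)).mulVec (symVec d i s j)
      = symVec d i s (j + 1) := by
  funext p
  rw [SS_apply]
  show symVec d i s j (p.1 - 1, p.2 - 1) = _
  simp only [symVec, Prod.mk.injEq, Prod.ext_iff, sub_eq_iff_eq_add]
  have e1 : j + (i : ZMod d) + 1 = j + 1 + (i : ZMod d) := by ring
  rw [e1]

lemma swap_ite {α : Type*} [DecidableEq α] (q : α × α) (a b : α) :
    (if (q.2, q.1) = (a, b) then (1:ℂ) else 0) = if q = (b, a) then 1 else 0 := by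
  apply if_congr _ rfl rfl
  rw [Prod.ext_iff, Prod.ext_iff]
  exact and_comm

lemma exists_rep (d m : ℕ) [NeZero d] (hm : d = 2*m+1) (δ : ZMod d) :
    ∃ i : ℤ, (δ ≠ 0 → 1 ≤ i) ∧ 0 ≤ i ∧ i ≤ ((d:ℤ)-1)/2 ∧
      ((i : ZMod d) = δ ∨ (i : ZMod d) = -δ) := by
  have hval : δ.val < d := ZMod.val_lt δ
  by_cases hle : δ.val ≤ m
  · refine ⟨(δ.val : ℤ), ?_, by positivity, by omega, Or.inl ?_⟩
    · intro h0
      have : δ.val ≠ 0 := fun hh => h0 (by rwa [ZMod.val_eq_zero] at hh)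
      omega
    · push_cast
      simp [ZMod.natCast_val, ZMod.cast_id]
  · refine ⟨(d : ℤ) - (δ.val : ℤ), fun _ => by omega, by omega, by omega, Or.inr ?_⟩
    push_cast
    simp [ZMod.natCast_val, ZMod.cast_id, ZMod.natCast_self, zero_sub]

lemma decomp (d : ℕ) [NeZero d] (s : ℂ) (hs : s * s = 1) (v : ZMod d × ZMod d → ℂ)
    (hv : ∀ q : ZMod d × ZMod d, v (q.2, q.1) = s * v q) :
    v = ∑ p : ZMod d × ZMod d, ((1/2 : ℂ) * v p) •
      (fun q => (if q = p then (1:ℂ) else 0) + s * (if q = (p.2, p.1) then 1 else 0)) := by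
  funext q
  rw [Finset.sum_apply]
  have hterm : ∀ p : ZMod d × ZMod d,
      (((1/2 : ℂ) * v p) • (fun q => (if q = p then (1:ℂ) else 0)
          + s * (if q = (p.2, p.1) then 1 else 0))) q
        = (if q = p then (1/2 : ℂ) * v p else 0)
          + (if q = (p.2, p.1) then s * ((1/2 : ℂ) * v p) else 0) := by
    intro p
    rw [Pi.smul_apply, smul_eq_mul]
    split <;> split <;> ring
  rw [Finset.sum_congr rfl (fun p _ => hterm p), Finset.sum_add_distrib]
  have h1 : ∑ p : ZMod d × ZMod d, (if q = p then (1/2 : ℂ) * v p else 0)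
      = (1/2 : ℂ) * v q := by
    rw [Finset.sum_ite_eq]; simp
  have h2 : ∑ p : ZMod d × ZMod d, (if q = (p.2, p.1) then s * ((1/2 : ℂ) * v p) else 0)
      = s * ((1/2 : ℂ) * v (q.2, q.1)) := by
    rw [← Equiv.sum_comp (Equiv.prodComm (ZMod d) (ZMod d))
      (fun p : ZMod d × ZMod d => if q = (p.2, p.1) then s * ((1/2 : ℂ) * v p) else 0)]
    simp [Finset.sum_ite_eq, Prod.swap]
  rw [h1, h2, hv q]
  linear_combination (-(1/2 : ℂ) * v q) * hs

lemma wmem1 (d m : ℕ) [NeZero d] (hm : d = 2*m+1) (p : ZMod d × ZMod d) :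
    (fun q => (if q = p then (1:ℂ) else 0) + (1:ℂ) * (if q = (p.2, p.1) then 1 else 0)) ∈
      ⨆ i ∈ Finset.Icc (0:ℤ) (((d:ℤ)-1)/2), Hsub d i 1 := by
  obtain ⟨i, -, h0, hk, hcase⟩ := exists_rep d m hm (p.2 - p.1)
  have hle : Hsub d i 1 ≤ ⨆ i ∈ Finset.Icc (0:ℤ) (((d:ℤ)-1)/2), Hsub d i 1 :=
    le_iSup₂ (f := fun i (_ : i ∈ Finset.Icc (0:ℤ) (((d:ℤ)-1)/2)) => Hsub d i 1) i
      (Finset.mem_Icc.mpr ⟨h0, hk⟩)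
  apply hle
  rcases hcase with hi | hi
  · have h1 : p.1 + (i : ZMod d) = p.2 := by rw [hi]; ring
    have he : (fun q => (if q = p then (1:ℂ) else 0)
        + (1:ℂ) * (if q = (p.2, p.1) then 1 else 0)) = symVec d i 1 p.1 := by
      funext q
      simp [symVec, h1]
    rw [he]
    exact Submodule.subset_span ⟨p.1, rfl⟩
  · have h1 : p.2 + (i : ZMod d) = p.1 := by rw [hi]; ring
    have he : (fun q => (if q = p then (1:ℂ) else 0)
        + (1:ℂ) * (if q = (p.2, p.1) then 1 else 0)) = symVec d i 1 p.2 := by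
      funext q
      simp [symVec, h1]
      ring
    rw [he]
    exact Submodule.subset_span ⟨p.2, rfl⟩

lemma wmem2 (d m : ℕ) [NeZero d] (hm : d = 2*m+1) (p : ZMod d × ZMod d) :
    (fun q => (if q = p then (1:ℂ) else 0) + (-1:ℂ) * (if q = (p.2, p.1) then 1 else 0)) ∈
      ⨆ i ∈ Finset.Icc (1:ℤ) (((d:ℤ)-1)/2), Hsub d i (-1) := by
  by_cases hp : p.1 = p.2
  · have he : (fun q => (if q = p then (1:ℂ) else 0)
        + (-1:ℂ) * (if q = (p.2, p.1) then 1 else 0)) = 0 := by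
      obtain ⟨a, b⟩ := p
      simp only at hp
      subst hp
      funext q
      simp only [Pi.zero_apply]
      ring
    rw [he]
    exact zero_mem _
  · have hδ : p.2 - p.1 ≠ 0 := sub_ne_zero.mpr (Ne.symm hp)
    obtain ⟨i, hone, h0, hk, hcase⟩ := exists_rep d m hm (p.2 - p.1)
    have hle : Hsub d i (-1) ≤ ⨆ i ∈ Finset.Icc (1:ℤ) (((d:ℤ)-1)/2), Hsub d i (-1) :=
      le_iSup₂ (f := fun i (_ : i ∈ Finset.Icc (1:ℤ) (((d:ℤ)-1)/2)) => Hsub d i (-1)) i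
        (Finset.mem_Icc.mpr ⟨hone hδ, hk⟩)
    apply hle
    rcases hcase with hi | hi
    · have h1 : p.1 + (i : ZMod d) = p.2 := by rw [hi]; ring
      have he : (fun q => (if q = p then (1:ℂ) else 0)
          + (-1:ℂ) * (if q = (p.2, p.1) then 1 else 0)) = symVec d i (-1) p.1 := by
        funext q
        simp [symVec, h1]
      rw [he]
      exact Submodule.subset_span ⟨p.1, rfl⟩
    · have h1 : p.2 + (i : ZMod d) = p.1 := by rw [hi]; ring
      have he : (fun q => (if q = p then (1:ℂ) else 0)
          + (-1:ℂ) * (if q = (p.2, p.1) then 1 else 0))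
          = (-1 : ℂ) • symVec d i (-1) p.2 := by
        funext q
        simp only [symVec, Pi.smul_apply, smul_eq_mul, Int.cast_neg, Int.cast_one, h1,
          Prod.mk.eta]
        ring
      rw [he]
      exact Submodule.smul_mem _ _ (Submodule.subset_span ⟨p.2, rfl⟩)

end Aux

theorem stmt16 (d : ℕ) [NeZero d] (hd : Odd d) :
    (∀ i : ℤ, i ∈ Finset.Icc (0 : ℤ) (((d : ℤ) - 1) / 2) → Module.finrank ℂ (Hsub d i 1) = d) ∧
    (∀ i : ℤ, i ∈ Finset.Icc (1 : ℤ) (((d : ℤ) - 1) / 2) → Module.finrank ℂ (Hsub d i (-1)) = d) ∧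
    (∀ (i s : ℤ), ∀ v ∈ Hsub d i s,
      (Matrix.kroneckerMap (· * ·) (Cm d) (Cm d)).mulVec v ∈ Hsub d i s ∧
      (Matrix.kroneckerMap (· * ·) (Sm d) (Sm d)).mulVec v ∈ Hsub d i s) ∧
    (⨆ i ∈ Finset.Icc (0 : ℤ) (((d : ℤ) - 1) / 2), Hsub d i 1) = LinearMap.ker (swapL d - LinearMap.id) ∧
    (⨆ i ∈ Finset.Icc (1 : ℤ) (((d : ℤ) - 1) / 2), Hsub d i (-1)) = LinearMap.ker (swapL d + LinearMap.id) := by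
  obtain ⟨m, hm⟩ := id hd
  have hcast : ∀ i : ℤ, i ∈ Finset.Icc (1:ℤ) (((d:ℤ)-1)/2) → (i : ZMod d) ≠ 0 := by
    intro i hi hcon
    rw [Finset.mem_Icc] at hi
    rw [ZMod.intCast_zmod_eq_zero_iff_dvd] at hcon
    have := Int.le_of_dvd (by omega) hcon
    omega
  refine ⟨?_, ?_, ?_, ?_, ?_⟩
  · intro i _
    have hli := li_symVec d hd i 1 (Or.inr (by norm_num))
    simp only [Hsub]
    exact (finrank_span_eq_card hli).trans (ZMod.card d)
  · intro i hi
    have hli := li_symVec d hd i (-1) (Or.inl (hcast i hi))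
    simp only [Hsub]
    exact (finrank_span_eq_card hli).trans (ZMod.card d)
  · intro i s v hv
    have hgen : ∀ (M : Matrix (ZMod d × ZMod d) (ZMod d × ZMod d) ℂ),
        (∀ j, M.mulVec (symVec d i s j) ∈ Hsub d i s) → M.mulVec v ∈ Hsub d i s := by
      intro M hM
      induction hv using Submodule.span_induction with
      | mem x hx => obtain ⟨j, rfl⟩ := hx; exact hM j
      | zero => rw [Matrix.mulVec_zero]; exact zero_mem _
      | add x y hx hy ihx ihy => rw [Matrix.mulVec_add]; exact add_mem ihx ihy
      | smul a x hx ih => rw [Matrix.mulVec_smul]; exact Submodule.smul_mem _ a ih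
    constructor
    · apply hgen
      intro j
      rw [CC_symVec]
      exact Submodule.smul_mem _ _ (Submodule.subset_span ⟨j, rfl⟩)
    · apply hgen
      intro j
      rw [SS_symVec]
      exact Submodule.subset_span ⟨j + 1, rfl⟩
  · apply le_antisymm
    · apply iSup₂_le
      intro i _
      rw [Hsub, Submodule.span_le]
      rintro _ ⟨j, rfl⟩
      rw [SetLike.mem_coe, LinearMap.mem_ker]
      funext q
      show symVec d i 1 j (q.2, q.1) - symVec d i 1 j q = 0
      simp only [symVec, swap_ite]
      push_cast
      ring
    · intro v hv
      have hsym : ∀ q : ZMod d × ZMod d, v (q.2, q.1) = (1:ℂ) * v q := by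
        intro q
        have h' := LinearMap.mem_ker.mp hv
        have hq := congrFun h' q
        rw [one_mul]
        have h0 : v (q.2, q.1) - v q = 0 := hq
        linear_combination h0
      rw [decomp d 1 (by norm_num) v hsym]
      exact Submodule.sum_mem _ fun p _ =>
        Submodule.smul_mem _ _ (wmem1 d m hm p)
  · apply le_antisymm
    · apply iSup₂_le
      intro i _
      rw [Hsub, Submodule.span_le]
      rintro _ ⟨j, rfl⟩
      rw [SetLike.mem_coe, LinearMap.mem_ker]
      funext q
      show symVec d i (-1) j (q.2, q.1) + symVec d i (-1) j q = 0
      simp only [symVec, swap_ite]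
      push_cast
      ring
    · intro v hv
      have hsym : ∀ q : ZMod d × ZMod d, v (q.2, q.1) = (-1:ℂ) * v q := by
        intro q
        have h' := LinearMap.mem_ker.mp hv
        have hq : v (q.2, q.1) + v q = 0 := congrFun h' q
        linear_combination hq
      rw [decomp d (-1) (by norm_num) v hsym]
      exact Submodule.sum_mem _ fun p _ =>
        Submodule.smul_mem _ _ (wmem2 d m hm p)
end
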